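/- For integers q ≥ 0 and m ≥ 0, the total number of q-satisfying sequences of length m equals the sum over k = 0, 1, …, ⌊m/(q+1)⌋ of ((m−(q+1)k+1)/(m−k+1)) · binom(m, k). -/

import Mathlib

/-- A sequence of 0's (`false`) and 1's (`true`) is `q`-satisfying if in every
prefix the number of 0's is at least `q` times the number of 1's. -/
def QSatisfying (q : ℕ) (l : List Bool) : Prop :=
  ∀ m : ℕ, m ≤ l.length →
    q * (l.take m).count true ≤ (l.take m).count false

instance (q : ℕ) (l : List Bool) : Decidable (QSatisfying q l) := by
  unfold QSatisfying; infer_instance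

namespace CountQSat

open Finset

/-- The finset of lists of `Bool` of length `m`. -/
def LB : ℕ → Finset (List Bool)
  | 0 => {[]}
  | m + 1 => (LB m).image (· ++ [false]) ∪ (LB m).image (· ++ [true])

lemma mem_LB : ∀ {m : ℕ} {l : List Bool}, l ∈ LB m ↔ l.length = m
  | 0, l => by simp [LB, List.length_eq_zero_iff]
  | m + 1, l => by
    simp only [LB, Finset.mem_union, Finset.mem_image]
    constructor
    · rintro (⟨a, ha, rfl⟩ | ⟨a, ha, rfl⟩) <;>
        simp [List.length_append, mem_LB.1 ha]
    · intro h
      have hne : l ≠ [] := by intro hl; simp [hl] at h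
      have hd : l.dropLast ++ [l.getLast hne] = l := List.dropLast_append_getLast hne
      have hlen : l.dropLast.length = m := by
        rw [List.length_dropLast, h]; rfl
      cases hb : l.getLast hne with
      | false => exact Or.inl ⟨l.dropLast, mem_LB.2 hlen, by rw [← hb, hd]⟩
      | true => exact Or.inr ⟨l.dropLast, mem_LB.2 hlen, by rw [← hb, hd]⟩

lemma count_add (l : List Bool) : l.count true + l.count false = l.length := by
  induction l with
  | nil => rfl
  | cons b l ih => cases b <;> simp [List.count_cons] <;> omega

lemma qsat_append (q : ℕ) (l : List Bool) (b : Bool) :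
    QSatisfying q (l ++ [b]) ↔ QSatisfying q l ∧
      q * (l ++ [b]).count true ≤ (l ++ [b]).count false := by
  constructor
  · intro h
    refine ⟨fun n hn => ?_, ?_⟩
    · have := h n (by simp; omega)
      rwa [List.take_append_of_le_length hn] at this
    · have := h (l.length + 1) (by simp)
      rwa [List.take_of_length_le (by simp)] at this
  · rintro ⟨h1, h2⟩ n hn
    rcases Nat.lt_or_ge n (l.length + 1) with hlt | hge
    · rw [List.take_append_of_le_length (by omega)]
      exact h1 n (by omega)
    · rw [List.take_of_length_le (by simp; omega)]
      exact h2

lemma count_append_false (l : List Bool) :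
    (l ++ [false]).count true = l.count true ∧
      (l ++ [false]).count false = l.count false + 1 := by
  constructor <;> simp

lemma count_append_true (l : List Bool) :
    (l ++ [true]).count true = l.count true + 1 ∧
      (l ++ [true]).count false = l.count false := by
  constructor <;> simp

/-- number of `q`-satisfying lists of length `m` with `k` trues -/
def A (q m k : ℕ) : ℕ :=
  ((LB m).filter fun l => QSatisfying q l ∧ l.count true = k).card

lemma A_zero (q k : ℕ) : A q 0 k = if k = 0 then 1 else 0 := by
  have hq : QSatisfying q [] := by intro n hn; simp at hn; subst hn; simp
  split <;> rename_i h
  · simp [A, LB, Finset.filter_singleton, hq, h]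
  · simp [A, LB, Finset.filter_singleton, hq, h]
    omega

lemma A_eq_zero {q m k : ℕ} (h : m < (q + 1) * k) : A q m k = 0 := by
  rw [A, Finset.card_eq_zero, Finset.filter_eq_empty_iff]
  rintro l hl ⟨hs, hk⟩
  have hlen := mem_LB.1 hl
  have h1 := hs l.length le_rfl
  rw [List.take_length] at h1
  have h2 := count_add l
  rw [Nat.succ_mul] at h
  rw [hk] at h1
  generalize q * k = a at h h1
  omega

lemma A_succ_aux (q m k : ℕ) :
    A q (m + 1) k =
      ((LB m).filter fun l =>
        QSatisfying q (l ++ [false]) ∧ (l ++ [false]).count true = k).card +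
      ((LB m).filter fun l =>
        QSatisfying q (l ++ [true]) ∧ (l ++ [true]).count true = k).card := by
  have hinjf : Function.Injective (fun l : List Bool => l ++ [false]) :=
    fun a b h => by simpa using h
  have hinjt : Function.Injective (fun l : List Bool => l ++ [true]) :=
    fun a b h => by simpa using h
  have hdis : ∀ s t : Finset (List Bool),
      Disjoint (s.image (· ++ [false])) (t.image (· ++ [true])) := by
    intro s t
    rw [Finset.disjoint_left]
    rintro x hx hy
    simp only [Finset.mem_image] at hx hy
    obtain ⟨a, _, ha⟩ := hx
    obtain ⟨b, _, hb⟩ := hy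
    have h1 := ha.trans hb.symm
    have h2 := (List.append_inj' h1 rfl).2
    simp at h2
  have hLB : LB (m + 1) = (LB m).image (· ++ [false]) ∪ (LB m).image (· ++ [true]) := rfl
  rw [A, hLB, Finset.filter_union, Finset.filter_image, Finset.filter_image,
    Finset.card_union_of_disjoint (hdis _ _),
    Finset.card_image_of_injective _ hinjf, Finset.card_image_of_injective _ hinjt]

lemma filter_false_eq (q m k : ℕ) :
    ((LB m).filter fun l =>
        QSatisfying q (l ++ [false]) ∧ (l ++ [false]).count true = k).card = A q m k := by
  rw [A]
  congr 1
  apply Finset.filter_congr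
  intro l _
  obtain ⟨hct, hcf⟩ := count_append_false l
  rw [qsat_append, hct, hcf]
  constructor
  · rintro ⟨⟨h1, _⟩, h3⟩; exact ⟨h1, h3⟩
  · rintro ⟨h1, h3⟩
    have h4 := h1 l.length le_rfl
    rw [List.take_length] at h4
    exact ⟨⟨h1, by omega⟩, h3⟩

lemma filter_true_eq (q m k : ℕ) :
    ((LB m).filter fun l =>
        QSatisfying q (l ++ [true]) ∧ (l ++ [true]).count true = k + 1).card =
      if (q + 1) * (k + 1) ≤ m + 1 then A q m k else 0 := by
  split <;> rename_i h
  · rw [A]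
    congr 1
    apply Finset.filter_congr
    intro l hl
    have hlen := mem_LB.1 hl
    have hadd := count_add l
    obtain ⟨hct, hcf⟩ := count_append_true l
    rw [qsat_append, hct, hcf]
    constructor
    · rintro ⟨⟨h1, _⟩, h3⟩; exact ⟨h1, by omega⟩
    · rintro ⟨h1, h2⟩
      refine ⟨⟨h1, ?_⟩, by omega⟩
      rw [h2]
      rw [Nat.succ_mul] at h
      generalize q * (k + 1) = a at h ⊢
      omega
  · rw [Finset.card_eq_zero, Finset.filter_eq_empty_iff]
    rintro l hl ⟨hs, hk⟩
    have hlen := mem_LB.1 hl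
    have hadd := count_add l
    obtain ⟨hct, hcf⟩ := count_append_true l
    rw [qsat_append, hct, hcf] at hs
    rw [hct] at hk
    obtain ⟨-, h2⟩ := hs
    rw [show l.count true = k by omega] at h2
    rw [Nat.succ_mul] at h
    rw [show l.count true = k by omega] at hadd
    generalize q * (k + 1) = a at h h2
    omega

lemma filter_true_zero (q m : ℕ) :
    ((LB m).filter fun l =>
        QSatisfying q (l ++ [true]) ∧ (l ++ [true]).count true = 0).card = 0 := by
  rw [Finset.card_eq_zero, Finset.filter_eq_empty_iff]
  rintro l _ ⟨_, hk⟩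
  simp [List.count_append] at hk

lemma A_succ (q m k : ℕ) :
    A q (m + 1) (k + 1) =
      A q m (k + 1) + if (q + 1) * (k + 1) ≤ m + 1 then A q m k else 0 := by
  rw [A_succ_aux, filter_false_eq, filter_true_eq]

lemma A_succ_zero (q m : ℕ) : A q (m + 1) 0 = A q m 0 := by
  rw [A_succ_aux, filter_false_eq, filter_true_zero]
  omega

lemma A_zero_col (q m : ℕ) : A q m 0 = 1 := by
  induction m with
  | zero => simp [A_zero]
  | succ m ih => rw [A_succ_zero, ih]

lemma A_closed (q : ℕ) : ∀ m k : ℕ, (q + 1) * (k + 1) ≤ m →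
    (A q m (k + 1) : ℚ) = Nat.choose m (k + 1) - q * Nat.choose m k := by
  intro m
  induction m with
  | zero =>
    intro k h
    simp [Nat.le_zero, Nat.mul_eq_zero] at h
  | succ m ih =>
    intro k h
    rw [A_succ, if_pos h, Nat.cast_add]
    rcases Nat.lt_or_ge m ((q + 1) * (k + 1)) with hc | hc
    · -- boundary case : (q+1)*(k+1) = m+1
      have heq : (q + 1) * (k + 1) = m + 1 := by omega
      have h0 : A q m (k + 1) = 0 := A_eq_zero hc
      rw [h0, Nat.cast_zero, zero_add]
      cases k with
      | zero =>
        have hm : m = q := by omega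
        rw [A_zero_col]
        subst hm
        simp [Nat.choose_one_right]
      | succ j =>
        have hle : (q + 1) * (j + 1) ≤ m := by
          have hx : (q + 1) * (j + 2) = (q + 1) * (j + 1) + (q + 1) := by ring
          generalize (q + 1) * (j + 1) = a at hx ⊢
          generalize (q + 1) * (j + 2) = b at hx heq
          omega
        rw [ih j hle]
        have hkey : Nat.choose m (j + 1 + 1) = q * Nat.choose m (j + 1) := by
          have h1 := Nat.choose_succ_right_eq m (j + 1)
          have h2 : m - (j + 1) = q * (j + 2) := by
            rw [Nat.succ_mul] at heq
            generalize q * (j + 2) = a at heq ⊢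
            omega
          rw [h2] at h1
          have h3 : Nat.choose m (j + 1 + 1) * (j + 1 + 1) = q * Nat.choose m (j + 1) * (j + 1 + 1) := by
            rw [h1]; ring
          exact Nat.eq_of_mul_eq_mul_right (by omega) h3
        have hkeyQ : (Nat.choose m (j + 1 + 1) : ℚ) = q * Nat.choose m (j + 1) := by
          exact_mod_cast hkey
        rw [Nat.choose_succ_succ m (j + 1), Nat.choose_succ_succ m j]
        simp only [Nat.succ_eq_add_one]
        push_cast
        linear_combination -hkeyQ
    · -- interior case
      rw [ih k hc]
      cases k with
      | zero =>
        rw [A_zero_col]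
        rw [Nat.choose_succ_succ m 0]
        push_cast
        simp [Nat.choose_one_right]
        ring
      | succ j =>
        have hle : (q + 1) * (j + 1) ≤ m := by
          have hx : (q + 1) * (j + 2) = (q + 1) * (j + 1) + (q + 1) := by ring
          generalize (q + 1) * (j + 1) = a at hx ⊢
          generalize (q + 1) * (j + 2) = b at hx hc
          omega
        rw [ih j hle, Nat.choose_succ_succ m (j + 1), Nat.choose_succ_succ m j]
        simp only [Nat.succ_eq_add_one]
        push_cast
        ring

end CountQSat

open CountQSat Finset in
/-- For `q, m ≥ 0`, the total number of `q`-satisfying sequences of length `m` equals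
`Σ_{k=0}^{⌊m/(q+1)⌋} ((m−(q+1)k+1)/(m−k+1)) · C(m, k)`. -/
theorem count_q_satisfying_total (q m : ℕ) :
    (Nat.card {l : List Bool // l.length = m ∧ QSatisfying q l} : ℚ) =
      ∑ k ∈ Finset.range (m / (q + 1) + 1),
        ((m : ℚ) - (q + 1) * k + 1) / ((m : ℚ) - k + 1) * Nat.choose m k := by
  have e : {l : List Bool // l.length = m ∧ QSatisfying q l} ≃
      {l : List Bool // l ∈ (LB m).filter fun l => QSatisfying q l} :=
    Equiv.subtypeEquivRight fun l => by simp [mem_LB, and_comm]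
  rw [Nat.card_congr e, Nat.card_eq_finsetCard]
  have hfib : ((LB m).filter fun l => QSatisfying q l).card =
      ∑ k ∈ Finset.range (m + 1), A q m k := by
    rw [Finset.card_eq_sum_card_fiberwise (f := fun l => l.count true)
      (t := Finset.range (m + 1)) (fun l hl => by
        simp only [Finset.mem_coe, Finset.mem_filter] at hl
        have h1 := mem_LB.1 hl.1
        have h2 := l.count_le_length (a := true)
        simp only [Finset.mem_coe, Finset.mem_range]; omega)]
    apply Finset.sum_congr rfl
    intro k _
    rw [Finset.filter_filter]
    rfl
  rw [hfib]
  have hd : m / (q + 1) + 1 ≤ m + 1 := by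
    have := Nat.div_le_self m (q + 1); omega
  rw [← Finset.sum_subset (Finset.range_subset_range.2 hd) (fun k _ hk => by
    simp only [Finset.mem_range, not_lt] at hk
    exact A_eq_zero (by
      have h1 : m / (q + 1) < k := by omega
      have h2 : m < k * (q + 1) := (Nat.div_lt_iff_lt_mul (Nat.succ_pos q)).1 h1
      rw [Nat.mul_comm]
      exact h2))]
  push_cast
  apply Finset.sum_congr rfl
  intro k hk
  have hkle : (q + 1) * k ≤ m := by
    rw [Finset.mem_range] at hk
    have hk' : k ≤ m / (q + 1) := by omega
    calc (q + 1) * k = k * (q + 1) := Nat.mul_comm ..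
      _ ≤ m := (Nat.le_div_iff_mul_le (Nat.succ_pos q)).1 hk'
  cases k with
  | zero =>
    rw [A_zero_col]
    push_cast
    simp only [Nat.choose_zero_right, Nat.cast_one, mul_zero, sub_zero, mul_one]
    rw [div_self (by positivity : (m : ℚ) + 1 ≠ 0)]
  | succ j =>
    have hjm : j + 1 ≤ m := by
      calc j + 1 ≤ (q + 1) * (j + 1) := Nat.le_mul_of_pos_left _ (Nat.succ_pos q)
        _ ≤ m := hkle
    rw [A_closed q m j hkle]
    have hkey : (Nat.choose m (j + 1) : ℚ) * (j + 1) = Nat.choose m j * ((m : ℚ) - j) := by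
      have h1 := Nat.choose_succ_right_eq m j
      calc (Nat.choose m (j + 1) : ℚ) * (j + 1)
          = ((Nat.choose m (j + 1) * (j + 1) : ℕ) : ℚ) := by push_cast; ring
        _ = ((Nat.choose m j * (m - j) : ℕ) : ℚ) := by rw [h1]
        _ = Nat.choose m j * ((m : ℚ) - j) := by
            rw [Nat.cast_mul, Nat.cast_sub (by omega : j ≤ m)]
    have hden : (m : ℚ) - (j + 1) + 1 ≠ 0 := by
      have h2 : (j : ℚ) + 1 ≤ m := by exact_mod_cast hjm
      intro hx
      rw [show (m : ℚ) - (j + 1) + 1 = (m : ℚ) - j by ring] at hx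
      linarith
    push_cast
    rw [div_mul_eq_mul_div, eq_div_iff hden]
    linear_combination (q : ℚ) * hkey
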